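/- arXiv:2006.03003 — 2 statements merged into one kernel-verified Lean document; each statement's English description precedes it below -/
import Mathlib

section
/- Up to a rational scalar, p_{2k+1} is the unique homogeneous polynomial p(x_1,x_2) of degree 2k+3 over ℚ satisfying: p(x_1,0)=p(0,x_2)=0, p(x_1,x_2)+p(x_2,x_1)=0, and, writing p(x_1,x_2)=x_1 x_2 (x_1−x_2) r(x_1,x_2) for a polynomial r, the conditions r(0,x)=2r(x,−x) and ∂²r/∂x_1² = ∂²r/∂x_2² hold. Concretely, any such p is a scalar multiple of x_1 x_2 (x_1−x_2)·((1−2^{2k+1})(x_1+x_2)^{2k} − (x_1−x_2)^{2k}). -/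
open MvPolynomial

lemma deg2 (d : Fin 2 →₀ ℕ) : d.degree = d 0 + d 1 := by
  rw [Finsupp.degree_apply,
    Finset.sum_subset (Finset.subset_univ d.support)
      (fun i _ hi => Finsupp.notMem_support_iff.mp hi)]
  exact Fin.sum_univ_two _

lemma isHomog_iff {φ : MvPolynomial (Fin 2) ℚ} {n : ℕ} :
    φ.IsHomogeneous n ↔ ∀ d : Fin 2 →₀ ℕ, coeff d φ ≠ 0 → d.degree = n := by
  unfold MvPolynomial.IsHomogeneous MvPolynomial.IsWeightedHomogeneous
  simp_rw [Finsupp.degree_eq_weight_one]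
  exact Iff.rfl

lemma coeff_pderiv' (i : Fin 2) (f : MvPolynomial (Fin 2) ℚ) (m : Fin 2 →₀ ℕ) :
    coeff m (pderiv i f) = ((m i : ℚ) + 1) * coeff (m + Finsupp.single i 1) f := by
  induction f using MvPolynomial.induction_on' with
  | add f g hf hg => simp [hf, hg, mul_add]
  | monomial s a =>
    rw [pderiv_monomial, coeff_monomial, coeff_monomial]
    by_cases hs : s = m + Finsupp.single i 1
    · have h1 : s - Finsupp.single i 1 = m := by rw [hs]; exact add_tsub_cancel_right _ _
      have h2 : s i = m i + 1 := by rw [hs]; simp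
      rw [if_pos h1, if_pos hs, h2]
      push_cast; ring
    · rw [if_neg hs, mul_zero]
      by_cases hsi : s i = 0
      · simp [hsi]
      · have hle : Finsupp.single i 1 ≤ s := by
          rwa [Finsupp.single_le_iff, Nat.one_le_iff_ne_zero]
        have hne : s - Finsupp.single i 1 ≠ m := fun h => hs (by rw [← h, tsub_add_cancel_of_le hle])
        rw [if_neg hne]

lemma pderiv_comm' (i j : Fin 2) (f : MvPolynomial (Fin 2) ℚ) :
    pderiv i (pderiv j f) = pderiv j (pderiv i f) := by
  apply MvPolynomial.ext; intro m
  rw [coeff_pderiv', coeff_pderiv', coeff_pderiv', coeff_pderiv']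
  rcases eq_or_ne i j with rfl | hij
  · rfl
  · have h1 : (m + Finsupp.single i 1 : Fin 2 →₀ ℕ) j = m j := by
      simp [Finsupp.single_eq_of_ne' hij]
    have h2 : (m + Finsupp.single j 1 : Fin 2 →₀ ℕ) i = m i := by
      simp [Finsupp.single_eq_of_ne' hij.symm]
    rw [h1, h2, add_right_comm]
    ring

lemma eq_C_of_pderiv_zero (f : MvPolynomial (Fin 2) ℚ)
    (h0 : pderiv 0 f = 0) (h1 : pderiv 1 f = 0) : f = C (coeff 0 f) := by
  apply MvPolynomial.ext; intro m
  rcases eq_or_ne m 0 with rfl | hm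
  · simp
  · have hex : ∃ i, m i ≠ 0 := by
      by_contra h; push_neg at h; exact hm (Finsupp.ext h)
    obtain ⟨i, hi⟩ := hex
    have hle : Finsupp.single i 1 ≤ m := by
      rwa [Finsupp.single_le_iff, Nat.one_le_iff_ne_zero]
    have key := coeff_pderiv' i f (m - Finsupp.single i 1)
    rw [tsub_add_cancel_of_le hle] at key
    have hz : pderiv i f = 0 := by fin_cases i <;> assumption
    rw [hz, coeff_zero] at key
    have hne : ((((m - Finsupp.single i 1 : Fin 2 →₀ ℕ) i) : ℚ) + 1) ≠ 0 := by
      positivity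
    have : coeff m f = 0 := (mul_eq_zero.mp key.symm).resolve_left hne
    rw [this, coeff_C, if_neg (Ne.symm hm)]

lemma pderiv_homog {f : MvPolynomial (Fin 2) ℚ} {n : ℕ} (i : Fin 2)
    (hf : f.IsHomogeneous n) : (pderiv i f).IsHomogeneous (n - 1) := by
  rw [isHomog_iff]
  intro d hd
  rw [coeff_pderiv'] at hd
  have h2 : coeff (d + Finsupp.single i 1) f ≠ 0 := fun h => hd (by rw [h, mul_zero])
  have h3 := isHomog_iff.mp hf _ h2
  have hdeg : (d + Finsupp.single i 1).degree = d.degree + 1 := by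
    rw [deg2, deg2]
    fin_cases i <;> simp [Finsupp.single_apply] <;> omega
  omega

lemma homog_zero_eq_C {g : MvPolynomial (Fin 2) ℚ} (hg : g.IsHomogeneous 0) :
    g = C (coeff 0 g) := by
  apply MvPolynomial.ext; intro d
  rcases eq_or_ne d 0 with rfl | hd
  · simp
  · rw [hg.coeff_eq_zero (by rwa [Ne, Finsupp.degree_eq_zero_iff]), coeff_C,
      if_neg (Ne.symm hd)]
lemma wave_half (ε : ℚ) : ∀ (m : ℕ) (g : MvPolynomial (Fin 2) ℚ), g.IsHomogeneous m →
    pderiv 1 g = C ε * pderiv 0 g → ∃ c : ℚ, g = C c * (X 0 + C ε * X 1) ^ m := by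
  intro m
  induction m with
  | zero =>
    intro g hg _
    exact ⟨coeff 0 g, by rw [pow_zero, mul_one]; exact homog_zero_eq_C hg⟩
  | succ m ih =>
    intro g hg hD
    have hh_hom : (pderiv 0 g).IsHomogeneous m := by
      simpa using pderiv_homog 0 hg
    have hh_D : pderiv 1 (pderiv 0 g) = C ε * pderiv 0 (pderiv 0 g) := by
      rw [pderiv_comm' 1 0, hD, pderiv_C_mul]
    obtain ⟨c, hc⟩ := ih (pderiv 0 g) hh_hom hh_D
    refine ⟨c / (m + 1), ?_⟩
    set q : MvPolynomial (Fin 2) ℚ := X 0 + C ε * X 1 with hq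
    have hq0 : pderiv 0 q = 1 := by
      rw [hq, map_add, pderiv_C_mul, pderiv_X_self, pderiv_X_of_ne (by decide : (1:Fin 2) ≠ 0)]
      ring
    have hq1 : pderiv 1 q = C ε := by
      rw [hq, map_add, pderiv_C_mul, pderiv_X_self, pderiv_X_of_ne (by decide : (0:Fin 2) ≠ 1)]
      ring
    have hcast : ((m + 1 : ℕ) : MvPolynomial (Fin 2) ℚ) = C ((m : ℚ) + 1) := by
      push_cast
      simp
    have hfin : C (c / ((m:ℚ) + 1)) * C ((m:ℚ) + 1) = (C c : MvPolynomial (Fin 2) ℚ) := by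
      rw [← map_mul, div_mul_cancel₀]
      positivity
    have e0 : pderiv 0 (g - C (c / ((m:ℚ)+1)) * q ^ (m+1)) = 0 := by
      rw [map_sub, pderiv_C_mul, pderiv_pow, hq0, mul_one, Nat.add_sub_cancel, hcast, hc]
      linear_combination (-(q ^ m)) * hfin
    have e1 : pderiv 1 (g - C (c / ((m:ℚ)+1)) * q ^ (m+1)) = 0 := by
      rw [map_sub, pderiv_C_mul, pderiv_pow, hq1, Nat.add_sub_cancel, hcast, hD, hc]
      linear_combination (-(C ε * q ^ m)) * hfin
    have hg' := eq_C_of_pderiv_zero _ e0 e1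
    have hq_hom : (q ^ (m+1)).IsHomogeneous (m+1) := by
      have : q.IsHomogeneous 1 :=
        (isHomogeneous_X ℚ 0).add ((isHomogeneous_X ℚ 1).C_mul ε)
      simpa using this.pow (m+1)
    have hc0 : coeff 0 (g - C (c / ((m:ℚ)+1)) * q ^ (m+1)) = 0 := by
      rw [coeff_sub, coeff_C_mul,
        hg.coeff_eq_zero (by simp), hq_hom.coeff_eq_zero (by simp)]
      ring
    rw [hc0, map_zero, sub_eq_zero] at hg'
    exact hg'

lemma homog_factor {q r : MvPolynomial (Fin 2) ℚ} {a b : ℕ} (hq : q.IsHomogeneous a)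
    (hqr : (q * r).IsHomogeneous (a + b)) (hq0 : q ≠ 0) :
    r = 0 ∨ r.IsHomogeneous b := by
  rcases eq_or_ne r 0 with rfl | hr
  · left; rfl
  right
  have hcomp : ∀ n, n ≠ b → homogeneousComponent n r = 0 := by
    intro n hn
    rcases le_or_gt n r.totalDegree with hle | hlt
    · have h1 : homogeneousComponent (a + n) (q * r) = q * homogeneousComponent n r := by
        have hterm : ∀ i ∈ Finset.range (r.totalDegree + 1),
            homogeneousComponent (a + n) (q * homogeneousComponent i r)
              = if i = n then q * homogeneousComponent n r else 0 := by
          intro i _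
          rcases eq_or_ne i n with rfl | hi
          · rw [homogeneousComponent_of_mem ((mem_homogeneousSubmodule _ _).mpr
              (hq.mul (homogeneousComponent_isHomogeneous i r))), if_pos rfl, if_pos rfl]
          · rw [homogeneousComponent_of_mem ((mem_homogeneousSubmodule _ _).mpr
              (hq.mul (homogeneousComponent_isHomogeneous i r))), if_neg (by omega), if_neg hi]
        rw [show q * r = ∑ i ∈ Finset.range (r.totalDegree + 1), q * homogeneousComponent i r by
            rw [← Finset.mul_sum, sum_homogeneousComponent], map_sum,
          Finset.sum_congr rfl hterm, Finset.sum_ite_eq' (Finset.range (r.totalDegree + 1)) n,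
          if_pos (Finset.mem_range.mpr (by omega))]
      have h2 : homogeneousComponent (a + n) (q * r) = 0 := by
        rw [homogeneousComponent_of_mem ((mem_homogeneousSubmodule _ _).mpr hqr),
          if_neg (by omega)]
      exact (mul_eq_zero.mp (h1.symm.trans h2)).resolve_left hq0
    · exact homogeneousComponent_eq_zero n r hlt
  have hrb : r = homogeneousComponent b r := by
    conv_lhs => rw [← sum_homogeneousComponent r]
    rw [Finset.sum_eq_single b (fun n _ hn => hcomp n hn)
      (fun hb => homogeneousComponent_eq_zero b r (by simpa using hb))]
  rw [hrb]
  exact homogeneousComponent_isHomogeneous b r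

/-- Characterisation of the block degree one generators: any homogeneous polynomial
`p(x_1,x_2)` of degree `2k+3` over `ℚ` with `p(x_1,0) = p(0,x_2) = 0`,
`p(x_1,x_2) + p(x_2,x_1) = 0`, which factors as `p = x_1 x_2 (x_1 − x_2) r` with
`r(0,x) = 2 r(x,−x)` and `∂²r/∂x_1² = ∂²r/∂x_2²`, is a rational scalar multiple of
`x_1 x_2 (x_1 − x_2)·((1 − 2^{2k+1})(x_1+x_2)^{2k} − (x_1−x_2)^{2k})`. -/
theorem generator_characterisation (k : ℕ) (hk : 1 ≤ k)
    (p r : MvPolynomial (Fin 2) ℚ)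
    (hhom : p.IsHomogeneous (2 * k + 3))
    (h10 : ∀ x : ℚ, eval ![x, 0] p = 0)
    (h01 : ∀ x : ℚ, eval ![0, x] p = 0)
    (hanti : ∀ x y : ℚ, eval ![x, y] p + eval ![y, x] p = 0)
    (hfac : p = X 0 * X 1 * (X 0 - X 1) * r)
    (hr : ∀ x : ℚ, eval ![0, x] r = 2 * eval ![x, -x] r)
    (hwave : pderiv 0 (pderiv 0 r) = pderiv 1 (pderiv 1 r)) :
    ∃ c : ℚ, p = C c * (X 0 * X 1 * (X 0 - X 1) *
      (C (1 - 2 ^ (2 * k + 1)) * (X 0 + X 1) ^ (2 * k) - (X 0 - X 1) ^ (2 * k))) := by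
  have hq3 : (X 0 * X 1 * (X 0 - X 1) : MvPolynomial (Fin 2) ℚ).IsHomogeneous 3 := by
    have h := ((isHomogeneous_X ℚ (0 : Fin 2)).mul (isHomogeneous_X ℚ 1)).mul
      ((isHomogeneous_X ℚ (0 : Fin 2)).sub (isHomogeneous_X ℚ 1))
    simpa using h
  have hqne : (X 0 * X 1 * (X 0 - X 1) : MvPolynomial (Fin 2) ℚ) ≠ 0 := by
    intro h
    have h2 := congrArg (eval ![(2:ℚ), 1]) h
    simp at h2
    norm_num at h2
  have hr2k : r = 0 ∨ r.IsHomogeneous (2 * k) := by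
    refine homog_factor hq3 ?_ hqne
    have h3 : (3 + 2 * k) = 2 * k + 3 := by ring
    rw [h3, ← hfac]
    exact hhom
  rcases hr2k with hr0 | hrhom
  · exact ⟨0, by simp [hfac, hr0]⟩
  have hs_hom : (pderiv 0 r - pderiv 1 r).IsHomogeneous (2 * k - 1) :=
    (pderiv_homog 0 hrhom).sub (pderiv_homog 1 hrhom)
  have hw : pderiv 1 (pderiv 0 r - pderiv 1 r)
      = C (-1 : ℚ) * pderiv 0 (pderiv 0 r - pderiv 1 r) := by
    have h1 : pderiv 1 (pderiv 0 r) = pderiv 0 (pderiv 1 r) := pderiv_comm' 1 0 r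
    have hC : (C (-1 : ℚ) : MvPolynomial (Fin 2) ℚ) = -1 := by simp
    rw [map_sub, map_sub, h1, hwave, hC]
    ring
  obtain ⟨c1, hc1⟩ := wave_half (-1) (2 * k - 1) _ hs_hom hw
  have hXd : (X 0 + C (-1 : ℚ) * X 1 : MvPolynomial (Fin 2) ℚ) = X 0 - X 1 := by
    rw [map_neg, map_one]; ring
  rw [hXd] at hc1
  have hkQ : ((k : ℚ)) ≠ 0 := Nat.cast_ne_zero.mpr (by omega)
  set b : ℚ := c1 / (4 * k) with hb
  have hC2 : (C (2 : ℚ) : MvPolynomial (Fin 2) ℚ) = 2 := map_ofNat _ 2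
  have hfin : C b * C (2 * (k : ℚ)) * 2 = (C c1 : MvPolynomial (Fin 2) ℚ) := by
    rw [← hC2, ← map_mul, ← map_mul]
    congr 1
    rw [hb]
    field_simp
    ring
  have hDt : pderiv 1 (r - C b * (X 0 - X 1) ^ (2 * k))
      = C 1 * pderiv 0 (r - C b * (X 0 - X 1) ^ (2 * k)) := by
    have hp0 : pderiv 0 (X 0 - X 1 : MvPolynomial (Fin 2) ℚ) = 1 := by
      rw [map_sub, pderiv_X_self, pderiv_X_of_ne (by decide : (1 : Fin 2) ≠ 0)]; ring
    have hp1 : pderiv 1 (X 0 - X 1 : MvPolynomial (Fin 2) ℚ) = -1 := by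
      rw [map_sub, pderiv_X_self, pderiv_X_of_ne (by decide : (0 : Fin 2) ≠ 1)]; ring
    have hcast : ((2 * k : ℕ) : MvPolynomial (Fin 2) ℚ) = C (2 * (k : ℚ)) := by
      rw [← map_natCast (C : ℚ →+* MvPolynomial (Fin 2) ℚ) (2 * k)]
      congr 1
      push_cast
      ring
    rw [map_sub, map_sub, pderiv_C_mul, pderiv_C_mul, pderiv_pow, pderiv_pow, hp0, hp1,
      hcast, map_one, mul_one]
    linear_combination (-1 : MvPolynomial (Fin 2) ℚ) * hc1 + ((X 0 - X 1) ^ (2 * k - 1)) * hfin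
  have ht_hom : (r - C b * (X 0 - X 1) ^ (2 * k)).IsHomogeneous (2 * k) := by
    refine hrhom.sub ?_
    have hD1 : ((X 0 - X 1 : MvPolynomial (Fin 2) ℚ)).IsHomogeneous 1 :=
      (isHomogeneous_X ℚ 0).sub (isHomogeneous_X ℚ 1)
    simpa using (hD1.pow (2 * k)).C_mul b
  obtain ⟨a, ha⟩ := wave_half 1 (2 * k) _ ht_hom hDt
  have hXs : (X 0 + C (1 : ℚ) * X 1 : MvPolynomial (Fin 2) ℚ) = X 0 + X 1 := by
    rw [map_one, one_mul]
  rw [hXs] at ha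
  have hr_eq : r = C a * (X 0 + X 1) ^ (2 * k) + C b * (X 0 - X 1) ^ (2 * k) := by
    linear_combination ha
  have key : a + b = 2 ^ (2 * k + 1) * b := by
    have h1 := hr 1
    rw [hr_eq] at h1
    have e1 : eval ![(0 : ℚ), 1] (C a * (X 0 + X 1) ^ (2 * k) + C b * (X 0 - X 1) ^ (2 * k))
        = a + b := by
      simp [Even.neg_one_pow (even_two_mul k)]
    have e2 : eval ![(1 : ℚ), -1] (C a * (X 0 + X 1) ^ (2 * k) + C b * (X 0 - X 1) ^ (2 * k))
        = b * 2 ^ (2 * k) := by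
      norm_num [zero_pow (by omega : 2 * k ≠ 0)]
    rw [e1, e2] at h1
    rw [h1]; ring
  have ha_eq : a = (2 ^ (2 * k + 1) - 1) * b := by linear_combination key
  refine ⟨-b, ?_⟩
  rw [hfac, hr_eq, ha_eq]
  simp only [map_sub, map_mul, map_one, map_neg, map_pow, map_ofNat]
  ring
end

section
/- Let f ∈ ℚ[x_1,x_2] and g ∈ ℚ[x_1,…,x_n] and define (f∘g)(x_1,…,x_{n+1}) := Σ_{i=1}^{n} [f(x_i,x_{i+1})/(x_i−x_{i+1})] · ( g(x_1,…,x_i,x_{i+2},…,x_{n+1})/x_i − g(x_1,…,x_{i−1},x_{i+1},…,x_{n+1})/x_{i+1} ), assuming f(x,x) = 0 and f(x,0) = f(0,x) = 0 so that each term is a polynomial. If f(x_1,x_2) + f(x_2,x_1) = 0 and g satisfies the shuffle relations Σ_{σ ∈ Sh_{n,r}} g(x_{σ(1)},…,x_{σ(n)}) = 0 for all 1 ≤ r < n, then f∘g satisfies Σ_{σ ∈ Sh_{n+1,r}} (f∘g)(x_{σ(1)},…,x_{σ(n+1)}) = 0 for all 1 ≤ r < n+1. -/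
open MvPolynomial Finset

theorem Equiv.Perm.inv_apply_self {α : Type*} (f : Equiv.Perm α) (x : α) : f⁻¹ (f x) = x :=
  f.symm_apply_apply x

theorem Equiv.Perm.apply_inv_self {α : Type*} (f : Equiv.Perm α) (x : α) : f (f⁻¹ x) = x :=
  f.apply_symm_apply x

def IsShuffle (n r : ℕ) (σ : Equiv.Perm (Fin n)) : Prop :=
  (∀ i j : Fin n, (i : ℕ) < (j : ℕ) → (j : ℕ) < r → σ⁻¹ i < σ⁻¹ j) ∧
  (∀ i j : Fin n, (i : ℕ) < (j : ℕ) → r ≤ (i : ℕ) → σ⁻¹ i < σ⁻¹ j)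

instance (n r : ℕ) : DecidablePred (IsShuffle n r) := fun σ => by
  unfold IsShuffle; infer_instance




section helpers
variable {m : ℕ}

def unpiv [NeZero m] (p v : Fin (m+1)) : Fin m :=
  if h : (v:ℕ) < (p:ℕ) then ⟨v, by have := p.isLt; omega⟩
  else ⟨(v:ℕ) - 1, by have := v.isLt; have := Nat.pos_of_ne_zero (NeZero.ne m); omega⟩

lemma unpiv_coe [NeZero m] (p v : Fin (m+1)) :
    ((unpiv p v : Fin m) : ℕ) = if (v:ℕ) < (p:ℕ) then (v:ℕ) else (v:ℕ) - 1 := by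
  unfold unpiv; split <;> rfl

lemma piv_coe (p : Fin (m+1)) (j : Fin m) :
    ((p.succAbove j : Fin (m+1)) : ℕ) = if (j:ℕ) < (p:ℕ) then (j:ℕ) else (j:ℕ)+1 := by
  unfold Fin.succAbove
  split <;> simp only [Fin.lt_def, Fin.coe_castSucc, Fin.val_succ] at * <;> split_ifs <;> omega

lemma unpiv_piv [NeZero m] (p : Fin (m+1)) (j : Fin m) : unpiv p (p.succAbove j) = j := by
  apply Fin.ext
  simp only [unpiv_coe, piv_coe]
  have := j.isLt
  split_ifs <;> omega

lemma piv_unpiv [NeZero m] (p v : Fin (m+1)) (h : v ≠ p) : p.succAbove (unpiv p v) = v := by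
  have h' : (v:ℕ) ≠ (p:ℕ) := fun hh => h (Fin.ext hh)
  apply Fin.ext
  simp only [piv_coe, unpiv_coe]
  have := v.isLt
  split_ifs <;> omega

lemma piv_ne (p : Fin (m+1)) (j : Fin m) : p.succAbove j ≠ p := Fin.succAbove_ne p j

lemma unpiv_lt [NeZero m] (p : Fin (m+1)) {v w : Fin (m+1)} (hv : v ≠ p) (hw : w ≠ p)
    (hvw : v < w) : unpiv p v < unpiv p w := by
  have hv' : (v:ℕ) ≠ (p:ℕ) := fun hh => hv (Fin.ext hh)
  have hw' : (w:ℕ) ≠ (p:ℕ) := fun hh => hw (Fin.ext hh)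
  rw [Fin.lt_def] at *
  simp only [unpiv_coe]
  split_ifs <;> omega

lemma piv_lt (p : Fin (m+1)) {j k : Fin m} (h : j < k) : p.succAbove j < p.succAbove k := by
  rw [Fin.lt_def] at *
  simp only [piv_coe]
  split_ifs <;> omega

lemma piv_block (c : Fin (m+1)) (r : ℕ) (j : Fin m) :
    ((c.succAbove j : Fin (m+1)) : ℕ) < r ↔ (j:ℕ) < (if (c:ℕ) < r then r-1 else r) := by
  rw [piv_coe]; split_ifs <;> omega

def squeeze [NeZero m] (σ : Equiv.Perm (Fin (m+1))) (p : Fin (m+1)) : Equiv.Perm (Fin m) where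
  toFun j := unpiv (σ p) (σ (p.succAbove j))
  invFun j := unpiv p (σ⁻¹ ((σ p).succAbove j))
  left_inv j := by
    show unpiv p (σ⁻¹ ((σ p).succAbove (unpiv (σ p) (σ (p.succAbove j))))) = j
    rw [piv_unpiv _ _ (fun h => piv_ne p j (σ.injective h)), Equiv.Perm.inv_apply_self,
      unpiv_piv]
  right_inv j := by
    show unpiv (σ p) (σ (p.succAbove (unpiv p (σ⁻¹ ((σ p).succAbove j))))) = j
    rw [piv_unpiv _ _ (fun h => piv_ne (σ p) j (by conv_rhs => rw [← h, Equiv.Perm.apply_inv_self])),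
      Equiv.Perm.apply_inv_self, unpiv_piv]

lemma squeeze_apply [NeZero m] (σ : Equiv.Perm (Fin (m+1))) (p : Fin (m+1)) (j : Fin m) :
    squeeze σ p j = unpiv (σ p) (σ (p.succAbove j)) := rfl

lemma squeeze_inv_apply [NeZero m] (σ : Equiv.Perm (Fin (m+1))) (p : Fin (m+1)) (j : Fin m) :
    (squeeze σ p)⁻¹ j = unpiv p (σ⁻¹ ((σ p).succAbove j)) := rfl

lemma sigma_piv [NeZero m] (σ : Equiv.Perm (Fin (m+1))) (p : Fin (m+1)) (j : Fin m) :
    σ (p.succAbove j) = (σ p).succAbove (squeeze σ p j) :=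
  (piv_unpiv _ _ (fun h => piv_ne p j (σ.injective h))).symm

def unsqueeze [NeZero m] (τ : Equiv.Perm (Fin m)) (p c : Fin (m+1)) : Equiv.Perm (Fin (m+1)) where
  toFun v := if v = p then c else c.succAbove (τ (unpiv p v))
  invFun v := if v = c then p else p.succAbove (τ⁻¹ (unpiv c v))
  left_inv v := by
    show (if (if v = p then c else c.succAbove (τ (unpiv p v))) = c then p
      else p.succAbove (τ⁻¹ (unpiv c (if v = p then c else c.succAbove (τ (unpiv p v)))))) = v
    by_cases hv : v = p
    · simp [hv]
    · rw [if_neg hv, if_neg (piv_ne _ _), unpiv_piv, Equiv.Perm.inv_apply_self, piv_unpiv _ _ hv]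
  right_inv v := by
    show (if (if v = c then p else p.succAbove (τ⁻¹ (unpiv c v))) = p then c
      else c.succAbove (τ (unpiv p (if v = c then p else p.succAbove (τ⁻¹ (unpiv c v)))))) = v
    by_cases hv : v = c
    · simp [hv]
    · rw [if_neg hv, if_neg (piv_ne _ _), unpiv_piv, Equiv.Perm.apply_inv_self, piv_unpiv _ _ hv]

lemma unsqueeze_apply_p [NeZero m] (τ : Equiv.Perm (Fin m)) (p c : Fin (m+1)) :
    unsqueeze τ p c p = c := if_pos rfl

lemma unsqueeze_apply_piv [NeZero m] (τ : Equiv.Perm (Fin m)) (p c : Fin (m+1)) (j : Fin m) :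
    unsqueeze τ p c (p.succAbove j) = c.succAbove (τ j) := by
  show (if _ then _ else _) = _
  rw [if_neg (piv_ne _ _), unpiv_piv]

lemma unsqueeze_inv_apply [NeZero m] (τ : Equiv.Perm (Fin m)) (p c : Fin (m+1)) (v : Fin (m+1)) :
    (unsqueeze τ p c)⁻¹ v = if v = c then p else p.succAbove (τ⁻¹ (unpiv c v)) := rfl

lemma squeeze_unsqueeze [NeZero m] (τ : Equiv.Perm (Fin m)) (p c : Fin (m+1)) :
    squeeze (unsqueeze τ p c) p = τ := by
  apply Equiv.ext fun j => ?_
  rw [squeeze_apply, unsqueeze_apply_p, unsqueeze_apply_piv, unpiv_piv]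

lemma unsqueeze_squeeze [NeZero m] (σ : Equiv.Perm (Fin (m+1))) (p : Fin (m+1)) :
    unsqueeze (squeeze σ p) p (σ p) = σ := by
  apply Equiv.ext fun v => ?_
  by_cases hv : v = p
  · rw [hv, unsqueeze_apply_p]
  · conv_lhs => rw [← piv_unpiv p v hv]
    rw [unsqueeze_apply_piv, ← sigma_piv, piv_unpiv p v hv]

end helpers


lemma isShuffle_iff {N r : ℕ} (σ : Equiv.Perm (Fin N)) :
    IsShuffle N r σ ↔ ∀ v w : Fin N, (v:ℕ) < (w:ℕ) → ((w:ℕ) < r ∨ r ≤ (v:ℕ)) → σ⁻¹ v < σ⁻¹ w := by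
  constructor
  · rintro ⟨h1, h2⟩ v w hvw (h | h)
    · exact h1 v w hvw h
    · exact h2 v w hvw h
  · intro h
    exact ⟨fun v w hvw hw => h v w hvw (Or.inl hw), fun v w hvw hv => h v w hvw (Or.inr hv)⟩

lemma adj_consec {N r : ℕ} {σ : Equiv.Perm (Fin N)} (hσ : IsShuffle N r σ) {s t : Fin N}
    (hst : (t:ℕ) = (s:ℕ)+1)
    (hblk : ((σ s : ℕ) < r ∧ (σ t : ℕ) < r) ∨ (r ≤ (σ s:ℕ) ∧ r ≤ (σ t:ℕ))) :
    (σ t : ℕ) = (σ s : ℕ) + 1 := by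
  rw [isShuffle_iff] at hσ
  have hne : (σ s : ℕ) ≠ (σ t : ℕ) := fun h => by
    have h2 := σ.injective (Fin.ext h)
    rw [Fin.ext_iff] at h2; omega
  by_contra hc
  rcases Nat.lt_or_ge (σ t : ℕ) (σ s : ℕ) with hlt | hge
  · have := hσ (σ t) (σ s) hlt
      (by rcases hblk with ⟨h1, h2⟩ | ⟨h1, h2⟩; exacts [Or.inl h1, Or.inr h2])
    rw [Equiv.Perm.inv_apply_self, Equiv.Perm.inv_apply_self, Fin.lt_def] at this
    omega
  · have hge2 : (σ s : ℕ) + 2 ≤ (σ t : ℕ) := by omega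
    have hwlt : (σ s : ℕ) + 1 < N := by have := (σ t).isLt; omega
    have hA := hσ (σ s) ⟨(σ s : ℕ)+1, hwlt⟩ (Nat.lt_succ_self _)
      (by rcases hblk with ⟨h1, h2⟩ | ⟨h1, h2⟩
          · exact Or.inl (show (σ s : ℕ)+1 < r by omega)
          · exact Or.inr h1)
    have hB := hσ ⟨(σ s : ℕ)+1, hwlt⟩ (σ t) (show (σ s : ℕ)+1 < (σ t : ℕ) by omega)
      (by rcases hblk with ⟨h1, h2⟩ | ⟨h1, h2⟩
          · exact Or.inl h2
          · exact Or.inr (show r ≤ (σ s : ℕ)+1 by omega))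
    rw [Equiv.Perm.inv_apply_self] at hA hB
    rw [Fin.lt_def] at hA hB
    omega

lemma swap_adj_lt {N : ℕ} (ic is s t : Fin N) (hadj : (is:ℕ) = (ic:ℕ)+1) (hst : s < t)
    (h1 : ¬(s = ic ∧ t = is)) : Equiv.swap ic is s < Equiv.swap ic is t := by
  simp only [Equiv.swap_apply_def]
  simp only [Fin.ext_iff] at h1
  rw [Fin.lt_def] at hst ⊢
  split_ifs <;> simp only [Fin.ext_iff, not_and] at * <;> omega

lemma swap_shuffle {n r : ℕ} {σ : Equiv.Perm (Fin (n+1))} (hσ : IsShuffle (n+1) r σ) (i : Fin n)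
    (hmix1 : ¬((σ i.castSucc : ℕ) < r ∧ (σ i.succ : ℕ) < r))
    (hmix2 : ¬(r ≤ (σ i.castSucc : ℕ) ∧ r ≤ (σ i.succ : ℕ))) :
    IsShuffle (n+1) r (σ * Equiv.swap i.castSucc i.succ) := by
  rw [isShuffle_iff] at hσ ⊢
  intro v w hvw hblk
  have hinv : (σ * Equiv.swap i.castSucc i.succ)⁻¹ = Equiv.swap i.castSucc i.succ * σ⁻¹ := by
    rw [mul_inv_rev, Equiv.swap_inv]
  rw [hinv]
  simp only [Equiv.Perm.mul_apply]
  apply swap_adj_lt _ _ _ _ (by simp) (hσ v w hvw hblk)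
  rintro ⟨hv, hw⟩
  have hv' : v = σ i.castSucc := by rw [← hv, Equiv.Perm.apply_inv_self]
  have hw' : w = σ i.succ := by rw [← hw, Equiv.Perm.apply_inv_self]
  rw [hv'] at hvw hblk
  rw [hw'] at hvw hblk
  rcases hblk with h | h
  · exact hmix1 ⟨by omega, h⟩
  · exact hmix2 ⟨h, by omega⟩

lemma squeeze_shuffle {m r : ℕ} [NeZero m] {σ : Equiv.Perm (Fin (m+1))}
    (hσ : IsShuffle (m+1) r σ) (p : Fin (m+1)) :
    IsShuffle m (if ((σ p : Fin (m+1)) : ℕ) < r then r-1 else r) (squeeze σ p) := by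
  rw [isShuffle_iff] at hσ ⊢
  intro v w hvw hblk
  rw [squeeze_inv_apply, squeeze_inv_apply]
  have hne : ∀ u : Fin m, σ⁻¹ ((σ p).succAbove u) ≠ p := fun u h =>
    piv_ne (σ p) u (by conv_rhs => rw [← h, Equiv.Perm.apply_inv_self])
  apply unpiv_lt p (hne v) (hne w)
  apply hσ
  · exact Fin.lt_def.mp (piv_lt _ (Fin.lt_def.mpr hvw))
  · rcases hblk with h | h
    · exact Or.inl ((piv_block (σ p) r w).mpr h)
    · refine Or.inr ?_
      have := (piv_block (σ p) r v).mp
      omega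

/-- The operation `(f ∘ g)(x_1,…,x_{n+1})
 = Σ_{i=1}^{n} f(x_i,x_{i+1})/(x_i−x_{i+1}) ·
   ( g(x_1,…,x_i,x_{i+2},…,x_{n+1})/x_i − g(x_1,…,x_{i−1},x_{i+1},…,x_{n+1})/x_{i+1} )`,
evaluated at a point `x`. -/
noncomputable def fog {n : ℕ} (f : MvPolynomial (Fin 2) ℚ) (g : MvPolynomial (Fin n) ℚ)
    (x : Fin (n + 1) → ℚ) : ℚ :=
  ∑ i : Fin n,
    eval ![x i.castSucc, x i.succ] f / (x i.castSucc - x i.succ) *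
      (eval (x ∘ (i.succ).succAbove) g / x i.castSucc
        - eval (x ∘ (i.castSucc).succAbove) g / x i.succ)



lemma unpiv_block {m : ℕ} [NeZero m] (c : Fin (m+1)) (r : ℕ) (u : Fin (m+1)) (hu : u ≠ c) :
    (u:ℕ) < r ↔ (unpiv c u : ℕ) < (if (c:ℕ) < r then r-1 else r) := by
  have h2 := piv_block c r (unpiv c u)
  rw [piv_unpiv c u hu] at h2
  exact h2

lemma piv_succ_self {m : ℕ} (q : Fin m) : (q.succ).succAbove q = q.castSucc := by
  apply Fin.ext
  rw [piv_coe]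
  simp only [Fin.val_succ, Fin.coe_castSucc]
  split_ifs <;> omega

lemma piv_castSucc_self {m : ℕ} (q : Fin m) : (q.castSucc).succAbove q = q.succ := by
  apply Fin.ext
  rw [piv_coe]
  simp only [Fin.val_succ, Fin.coe_castSucc]
  split_ifs <;> omega

lemma unpiv_succ_castSucc {m : ℕ} [NeZero m] (i : Fin m) : unpiv i.succ i.castSucc = i := by
  apply Fin.ext
  rw [unpiv_coe]
  simp only [Fin.val_succ, Fin.coe_castSucc]
  split_ifs <;> omega

lemma unpiv_castSucc_succ {m : ℕ} [NeZero m] (i : Fin m) : unpiv i.castSucc i.succ = i := by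
  apply Fin.ext
  rw [unpiv_coe]
  simp only [Fin.val_succ, Fin.coe_castSucc]
  split_ifs <;> omega

lemma unsqA {n r : ℕ} [NeZero n] {τ : Equiv.Perm (Fin n)} {a b : Fin (n+1)}
    (hb : (b:ℕ) = (a:ℕ)+1) (hblock : (a:ℕ)+1 < r ∨ r ≤ (a:ℕ)) (ha : (a:ℕ) < n)
    (hτ : IsShuffle n (if (a:ℕ) < r then r-1 else r) τ) :
    IsShuffle (n+1) r (unsqueeze τ (τ⁻¹ ⟨a, ha⟩).succ b) := by
  rw [isShuffle_iff] at hτ ⊢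
  intro v w hvw hblk
  rw [unsqueeze_inv_apply, unsqueeze_inv_apply]
  by_cases hvb : v = b
  · rw [if_pos hvb]
    have hwb : ¬(w = b) := fun h => by rw [hvb, h] at hvw; omega
    rw [if_neg hwb]
    rw [hvb] at hvw hblk
    have hub : (unpiv b w : ℕ) = (w:ℕ) - 1 := by rw [unpiv_coe, if_neg (by omega)]
    have h1 : τ⁻¹ ⟨a, ha⟩ < τ⁻¹ (unpiv b w) := by
      apply hτ
      · show (a:ℕ) < (unpiv b w : ℕ)
        rw [hub]; omega
      · rcases hblock with hB | hB
        · refine Or.inl ?_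
          rw [if_pos (by omega), hub]
          rcases hblk with h | h
          · omega
          · omega
        · refine Or.inr ?_
          rw [if_neg (by omega)]
          exact hB
    rw [Fin.lt_def, piv_coe]
    rw [Fin.lt_def] at h1
    simp only [Fin.val_succ] at h1 ⊢
    split_ifs <;> omega
  · rw [if_neg hvb]
    by_cases hwb : w = b
    · rw [if_pos hwb]
      rw [hwb] at hvw hblk
      have hu : (unpiv b v : ℕ) = (v:ℕ) := by rw [unpiv_coe, if_pos (by omega)]
      have hle : (τ⁻¹ (unpiv b v) : ℕ) ≤ (τ⁻¹ ⟨a, ha⟩ : ℕ) := by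
        rcases Nat.eq_or_lt_of_le (show (v:ℕ) ≤ (a:ℕ) by omega) with hva | hva
        · have heq : unpiv b v = ⟨a, ha⟩ := Fin.ext (by rw [hu]; exact hva)
          rw [heq]
        · have h2 : τ⁻¹ (unpiv b v) < τ⁻¹ ⟨a, ha⟩ := by
            apply hτ
            · show (unpiv b v : ℕ) < (a:ℕ)
              rw [hu]; omega
            · rcases hblock with hB | hB
              · refine Or.inl ?_
                show (a:ℕ) < (if (a:ℕ) < r then r-1 else r)
                rw [if_pos (by omega)]; omega
              · refine Or.inr ?_
                rw [if_neg (by omega), hu]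
                rcases hblk with h | h
                · omega
                · exact h
          exact Nat.le_of_lt (Fin.lt_def.mp h2)
      rw [Fin.lt_def, piv_coe]
      simp only [Fin.val_succ] at hle ⊢
      split_ifs <;> omega
    · rw [if_neg hwb]
      refine piv_lt _ ?_
      apply hτ
      · exact Fin.lt_def.mp (unpiv_lt b hvb hwb (Fin.lt_def.mpr hvw))
      · have hiv := unpiv_block b r v hvb
        have hiw := unpiv_block b r w hwb
        have hif : (if (b:ℕ) < r then r-1 else r) = (if (a:ℕ) < r then r-1 else r) := by
          split_ifs <;> omega
        rw [hif] at hiv hiw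
        rcases hblk with h | h
        · exact Or.inl (hiw.mp h)
        · refine Or.inr ?_; omega

lemma unsqB {n r : ℕ} [NeZero n] {τ : Equiv.Perm (Fin n)} {a b : Fin (n+1)}
    (hb : (b:ℕ) = (a:ℕ)+1) (hblock : (a:ℕ)+1 < r ∨ r ≤ (a:ℕ)) (ha : (a:ℕ) < n)
    (hτ : IsShuffle n (if (a:ℕ) < r then r-1 else r) τ) :
    IsShuffle (n+1) r (unsqueeze τ (τ⁻¹ ⟨a, ha⟩).castSucc a) := by
  rw [isShuffle_iff] at hτ ⊢
  intro v w hvw hblk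
  rw [unsqueeze_inv_apply, unsqueeze_inv_apply]
  by_cases hva : v = a
  · rw [if_pos hva]
    have hwa : ¬(w = a) := fun h => by rw [hva, h] at hvw; omega
    rw [if_neg hwa]
    rw [hva] at hvw hblk
    have hub : (unpiv a w : ℕ) = (w:ℕ) - 1 := by rw [unpiv_coe, if_neg (by omega)]
    have hge : (τ⁻¹ ⟨a, ha⟩ : ℕ) ≤ (τ⁻¹ (unpiv a w) : ℕ) := by
      rcases Nat.eq_or_lt_of_le (show (a:ℕ)+1 ≤ (w:ℕ) by omega) with hwa2 | hwa2
      · have heq : unpiv a w = ⟨a, ha⟩ := Fin.ext (by rw [hub]; show (w:ℕ)-1 = (a:ℕ); omega)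
        rw [heq]
      · have h2 : τ⁻¹ ⟨a, ha⟩ < τ⁻¹ (unpiv a w) := by
          apply hτ
          · show (a:ℕ) < (unpiv a w : ℕ)
            rw [hub]; omega
          · rcases hblock with hB | hB
            · refine Or.inl ?_
              rw [if_pos (by omega), hub]
              rcases hblk with h | h
              · omega
              · omega
            · refine Or.inr ?_
              rw [if_neg (by omega)]
              exact hB
        exact Nat.le_of_lt (Fin.lt_def.mp h2)
    rw [Fin.lt_def, piv_coe]
    simp only [Fin.coe_castSucc] at hge ⊢
    split_ifs <;> omega
  · rw [if_neg hva]
    by_cases hwa : w = a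
    · rw [if_pos hwa]
      rw [hwa] at hvw hblk
      have hu : (unpiv a v : ℕ) = (v:ℕ) := by rw [unpiv_coe, if_pos (by omega)]
      have h2 : τ⁻¹ (unpiv a v) < τ⁻¹ ⟨a, ha⟩ := by
        apply hτ
        · show (unpiv a v : ℕ) < (a:ℕ)
          rw [hu]; omega
        · rcases hblock with hB | hB
          · refine Or.inl ?_
            show (a:ℕ) < (if (a:ℕ) < r then r-1 else r)
            rw [if_pos (by omega)]; omega
          · refine Or.inr ?_
            rw [if_neg (by omega), hu]
            rcases hblk with h | h
            · omega
            · exact h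
      rw [Fin.lt_def, piv_coe]
      rw [Fin.lt_def] at h2
      simp only [Fin.coe_castSucc] at h2 ⊢
      split_ifs <;> omega
    · rw [if_neg hwa]
      refine piv_lt _ ?_
      apply hτ
      · exact Fin.lt_def.mp (unpiv_lt a hva hwa (Fin.lt_def.mpr hvw))
      · have hiv := unpiv_block a r v hva
        have hiw := unpiv_block a r w hwa
        rcases hblk with h | h
        · exact Or.inl (hiw.mp h)
        · refine Or.inr ?_; omega

lemma keyA {n r : ℕ} [NeZero n] (x : Fin (n+1) → ℚ) (g : MvPolynomial (Fin n) ℚ)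
    (a b : Fin (n+1)) (hb : (b:ℕ) = (a:ℕ)+1) (hblock : (a:ℕ)+1 < r ∨ r ≤ (a:ℕ)) :
    ∑ p ∈ (Finset.univ.filter (IsShuffle (n+1) r) ×ˢ Finset.univ).filter
        (fun p : Equiv.Perm (Fin (n+1)) × Fin n => p.1 p.2.castSucc = a ∧ p.1 p.2.succ = b),
      eval ((x ∘ p.1) ∘ (p.2.succ).succAbove) g
    = ∑ τ ∈ Finset.univ.filter (IsShuffle n (if (a:ℕ) < r then r-1 else r)),
      eval ((x ∘ b.succAbove) ∘ τ) g := by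
  have ha : (a:ℕ) < n := by have := b.isLt; omega
  have hif : (if (b:ℕ) < r then r-1 else r) = (if (a:ℕ) < r then r-1 else r) := by
    split_ifs <;> omega
  have hmk : ((⟨(a:ℕ), ha⟩ : Fin n) : ℕ) = (a:ℕ) := rfl
  have hpivba : b.succAbove ⟨a, ha⟩ = a := by
    apply Fin.ext
    rw [piv_coe, hmk, if_pos (by omega)]
  apply Finset.sum_nbij' (i := fun p => squeeze p.1 p.2.succ)
    (j := fun τ => (unsqueeze τ (τ⁻¹ ⟨a, ha⟩).succ b, τ⁻¹ ⟨a, ha⟩))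
  · intro p hp
    simp only [Finset.mem_filter, Finset.mem_product, Finset.mem_univ, true_and, and_true] at hp ⊢
    obtain ⟨hs, h1, h2⟩ := hp
    have := squeeze_shuffle hs p.2.succ
    rw [h2, hif] at this
    exact this
  · intro τ hτ
    simp only [Finset.mem_filter, Finset.mem_product, Finset.mem_univ, true_and, and_true] at hτ ⊢
    refine ⟨unsqA hb hblock ha hτ, ?_, unsqueeze_apply_p _ _ _⟩
    rw [← piv_succ_self (τ⁻¹ ⟨a, ha⟩), unsqueeze_apply_piv, Equiv.Perm.apply_inv_self, hpivba]
  · intro p hp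
    simp only [Finset.mem_filter, Finset.mem_product, Finset.mem_univ, true_and, and_true] at hp
    obtain ⟨hs, h1, h2⟩ := hp
    have hq : (squeeze p.1 p.2.succ)⁻¹ ⟨a, ha⟩ = p.2 := by
      rw [squeeze_inv_apply, h2, hpivba, show p.1⁻¹ a = p.2.castSucc from by
        rw [← h1, Equiv.Perm.inv_apply_self], unpiv_succ_castSucc]
    have h1' : unsqueeze (squeeze p.1 p.2.succ) ((squeeze p.1 p.2.succ)⁻¹ ⟨a, ha⟩).succ b
        = p.1 := by
      rw [hq, ← h2, unsqueeze_squeeze]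
    exact Prod.ext h1' hq
  · intro τ hτ
    exact squeeze_unsqueeze τ _ b
  · intro p hp
    simp only [Finset.mem_filter, Finset.mem_product, Finset.mem_univ, true_and, and_true] at hp
    obtain ⟨hs, h1, h2⟩ := hp
    have hfun : (x ∘ ⇑p.1) ∘ p.2.succ.succAbove = (x ∘ b.succAbove) ∘ ⇑(squeeze p.1 p.2.succ) := by
      funext j
      simp only [Function.comp_apply]
      rw [sigma_piv, h2]
    rw [hfun]

lemma keyB {n r : ℕ} [NeZero n] (x : Fin (n+1) → ℚ) (g : MvPolynomial (Fin n) ℚ)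
    (a b : Fin (n+1)) (hb : (b:ℕ) = (a:ℕ)+1) (hblock : (a:ℕ)+1 < r ∨ r ≤ (a:ℕ)) :
    ∑ p ∈ (Finset.univ.filter (IsShuffle (n+1) r) ×ˢ Finset.univ).filter
        (fun p : Equiv.Perm (Fin (n+1)) × Fin n => p.1 p.2.castSucc = a ∧ p.1 p.2.succ = b),
      eval ((x ∘ p.1) ∘ (p.2.castSucc).succAbove) g
    = ∑ τ ∈ Finset.univ.filter (IsShuffle n (if (a:ℕ) < r then r-1 else r)),
      eval ((x ∘ a.succAbove) ∘ τ) g := by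
  have ha : (a:ℕ) < n := by have := b.isLt; omega
  have hmk : ((⟨(a:ℕ), ha⟩ : Fin n) : ℕ) = (a:ℕ) := rfl
  have hpivab : a.succAbove ⟨a, ha⟩ = b := by
    apply Fin.ext
    rw [piv_coe, hmk, if_neg (by omega)]
    omega
  apply Finset.sum_nbij' (i := fun p => squeeze p.1 p.2.castSucc)
    (j := fun τ => (unsqueeze τ (τ⁻¹ ⟨a, ha⟩).castSucc a, τ⁻¹ ⟨a, ha⟩))
  · intro p hp
    simp only [Finset.mem_filter, Finset.mem_product, Finset.mem_univ, true_and, and_true] at hp ⊢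
    obtain ⟨hs, h1, h2⟩ := hp
    have := squeeze_shuffle hs p.2.castSucc
    rw [h1] at this
    exact this
  · intro τ hτ
    simp only [Finset.mem_filter, Finset.mem_product, Finset.mem_univ, true_and, and_true] at hτ ⊢
    refine ⟨unsqB hb hblock ha hτ, unsqueeze_apply_p _ _ _, ?_⟩
    rw [← piv_castSucc_self (τ⁻¹ ⟨a, ha⟩), unsqueeze_apply_piv, Equiv.Perm.apply_inv_self, hpivab]
  · intro p hp
    simp only [Finset.mem_filter, Finset.mem_product, Finset.mem_univ, true_and, and_true] at hp
    obtain ⟨hs, h1, h2⟩ := hp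
    have hq : (squeeze p.1 p.2.castSucc)⁻¹ ⟨a, ha⟩ = p.2 := by
      rw [squeeze_inv_apply, h1, hpivab, show p.1⁻¹ b = p.2.succ from by
        rw [← h2, Equiv.Perm.inv_apply_self], unpiv_castSucc_succ]
    have h1' : unsqueeze (squeeze p.1 p.2.castSucc) ((squeeze p.1 p.2.castSucc)⁻¹ ⟨a, ha⟩).castSucc a
        = p.1 := by
      rw [hq, ← h1, unsqueeze_squeeze]
    exact Prod.ext h1' hq
  · intro τ hτ
    exact squeeze_unsqueeze τ _ a
  · intro p hp
    simp only [Finset.mem_filter, Finset.mem_product, Finset.mem_univ, true_and, and_true] at hp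
    obtain ⟨hs, h1, h2⟩ := hp
    have hfun : (x ∘ ⇑p.1) ∘ p.2.castSucc.succAbove
        = (x ∘ a.succAbove) ∘ ⇑(squeeze p.1 p.2.castSucc) := by
      funext j
      simp only [Function.comp_apply]
      rw [sigma_piv, h1]
    rw [hfun]


lemma swap_piv₁ {m : ℕ} (i j : Fin m) :
    Equiv.swap i.castSucc i.succ ((i.succ).succAbove j) = (i.castSucc).succAbove j := by
  rw [Equiv.swap_apply_def]
  split_ifs with h1 h2
  · apply Fin.ext
    have h1' := congrArg Fin.val h1
    rw [piv_coe] at h1'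
    rw [piv_coe]
    simp only [Fin.val_succ, Fin.coe_castSucc] at *
    split_ifs at * <;> omega
  · exact absurd h2 (piv_ne _ _)
  · apply Fin.ext
    have h1' : (((i.succ).succAbove j : Fin (m+1)) : ℕ) ≠ (i.castSucc : ℕ) :=
      fun h => h1 (Fin.ext h)
    rw [piv_coe] at h1'
    rw [piv_coe, piv_coe]
    simp only [Fin.val_succ, Fin.coe_castSucc] at *
    split_ifs at * <;> omega

lemma swap_piv₂ {m : ℕ} (i j : Fin m) :
    Equiv.swap i.castSucc i.succ ((i.castSucc).succAbove j) = (i.succ).succAbove j := by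
  rw [← swap_piv₁ i j, Equiv.swap_apply_self]

noncomputable def Tterm (n : ℕ) (f : MvPolynomial (Fin 2) ℚ) (g : MvPolynomial (Fin n) ℚ)
    (x : Fin (n+1) → ℚ) (p : Equiv.Perm (Fin (n+1)) × Fin n) : ℚ :=
  eval ![x (p.1 p.2.castSucc), x (p.1 p.2.succ)] f / (x (p.1 p.2.castSucc) - x (p.1 p.2.succ)) *
    (eval ((x ∘ p.1) ∘ (p.2.succ).succAbove) g / x (p.1 p.2.castSucc)
      - eval ((x ∘ p.1) ∘ (p.2.castSucc).succAbove) g / x (p.1 p.2.succ))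

/-- If `f(x,x) = f(x,0) = f(0,x) = 0`, `f` is antisymmetric, and `g` satisfies all the
shuffle relations `Σ_{σ ∈ Sh_{n,r}} g(x_{σ(1)},…,x_{σ(n)}) = 0` for `1 ≤ r < n`, then
`f ∘ g` satisfies all the shuffle relations `Σ_{σ ∈ Sh_{n+1,r}} (f∘g)(x_σ) = 0` for
`1 ≤ r < n+1` (at generic points, where all divisions are defined). -/
theorem block_shuffle_step (n : ℕ) (hn : 1 ≤ n)
    (f : MvPolynomial (Fin 2) ℚ) (g : MvPolynomial (Fin n) ℚ)
    (hdiag : ∀ x : ℚ, eval ![x, x] f = 0)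
    (hx0 : ∀ x : ℚ, eval ![x, 0] f = 0)
    (h0x : ∀ x : ℚ, eval ![0, x] f = 0)
    (hanti : ∀ a b : ℚ, eval ![a, b] f + eval ![b, a] f = 0)
    (hg : ∀ r : ℕ, 1 ≤ r → r < n → ∀ x : Fin n → ℚ,
      ∑ σ ∈ Finset.univ.filter (IsShuffle n r), eval (x ∘ σ) g = 0) :
    ∀ r : ℕ, 1 ≤ r → r < n + 1 → ∀ x : Fin (n + 1) → ℚ,
      Function.Injective x → (∀ i, x i ≠ 0) →
      ∑ σ ∈ Finset.univ.filter (IsShuffle (n + 1) r), fog f g (x ∘ σ) = 0 := by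
  haveI : NeZero n := ⟨by omega⟩
  intro r hr1 hrn x hinj hxne
  have hstep : ∑ σ ∈ Finset.univ.filter (IsShuffle (n + 1) r), fog f g (x ∘ σ)
      = ∑ p ∈ (Finset.univ.filter (IsShuffle (n + 1) r) ×ˢ (Finset.univ : Finset (Fin n))),
          Tterm n f g x p := by
    rw [Finset.sum_product]
    rfl
  rw [hstep]
  rw [← Finset.sum_filter_add_sum_filter_not
    (Finset.univ.filter (IsShuffle (n + 1) r) ×ˢ (Finset.univ : Finset (Fin n)))
    (fun p => ((p.1 p.2.castSucc : Fin (n+1)) : ℕ) < r ∧ ((p.1 p.2.succ : Fin (n+1)) : ℕ) < r)]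
  rw [← Finset.sum_filter_add_sum_filter_not
    (((Finset.univ.filter (IsShuffle (n + 1) r) ×ˢ (Finset.univ : Finset (Fin n))).filter
      (fun p => ¬(((p.1 p.2.castSucc : Fin (n+1)) : ℕ) < r
        ∧ ((p.1 p.2.succ : Fin (n+1)) : ℕ) < r))))
    (fun p => r ≤ ((p.1 p.2.castSucc : Fin (n+1)) : ℕ) ∧ r ≤ ((p.1 p.2.succ : Fin (n+1)) : ℕ))]
  have hfirst : ∑ p ∈ (Finset.univ.filter (IsShuffle (n + 1) r)
      ×ˢ (Finset.univ : Finset (Fin n))).filter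
      (fun p => ((p.1 p.2.castSucc : Fin (n+1)) : ℕ) < r
        ∧ ((p.1 p.2.succ : Fin (n+1)) : ℕ) < r), Tterm n f g x p = 0 := by
    rw [← Finset.sum_fiberwise_of_maps_to (g := fun p => p.1 p.2.castSucc)
      (t := Finset.univ.filter (fun a : Fin (n+1) => (a:ℕ)+1 < r))
      (fun p hp => by
        simp only [Finset.mem_filter, Finset.mem_product, Finset.mem_univ, true_and,
          and_true] at hp ⊢
        obtain ⟨hs, hq1, hq2⟩ := hp
        have := adj_consec hs (show ((p.2.succ : Fin (n+1)) : ℕ) = ((p.2.castSucc : Fin (n+1)) : ℕ)+1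
          by simp) (Or.inl ⟨hq1, hq2⟩)
        omega)]
    apply Finset.sum_eq_zero
    intro a hA
    simp only [Finset.mem_filter, Finset.mem_univ, true_and] at hA
    have hbfin : (a:ℕ)+1 < n+1 := by omega
    set b : Fin (n+1) := ⟨(a:ℕ)+1, hbfin⟩ with hbdef
    have hb : (b:ℕ) = (a:ℕ)+1 := rfl
    have hblock : (a:ℕ)+1 < r ∨ r ≤ (a:ℕ) := Or.inl hA
    have hseteq : ((Finset.univ.filter (IsShuffle (n + 1) r)
        ×ˢ (Finset.univ : Finset (Fin n))).filter
        (fun p => ((p.1 p.2.castSucc : Fin (n+1)) : ℕ) < r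
          ∧ ((p.1 p.2.succ : Fin (n+1)) : ℕ) < r)).filter
        (fun p => p.1 p.2.castSucc = a)
        = (Finset.univ.filter (IsShuffle (n + 1) r) ×ˢ Finset.univ).filter
          (fun p : Equiv.Perm (Fin (n+1)) × Fin n =>
            p.1 p.2.castSucc = a ∧ p.1 p.2.succ = b) := by
      ext p
      simp only [Finset.mem_filter, Finset.mem_product, Finset.mem_univ, true_and, and_true]
      constructor
      · rintro ⟨⟨hs, hq1, hq2⟩, hpa⟩
        refine ⟨hs, hpa, ?_⟩
        have hcs := adj_consec hs (show ((p.2.succ : Fin (n+1)) : ℕ)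
          = ((p.2.castSucc : Fin (n+1)) : ℕ)+1 by simp) (Or.inl ⟨hq1, hq2⟩)
        apply Fin.ext
        rw [hcs, hpa, hb]
      · rintro ⟨hs, hpa, hpb⟩
        have h1 : ((p.1 p.2.castSucc : Fin (n+1)) : ℕ) = (a:ℕ) := congrArg Fin.val hpa
        have h2 : ((p.1 p.2.succ : Fin (n+1)) : ℕ) = (b:ℕ) := congrArg Fin.val hpb
        exact ⟨⟨hs, by omega, by omega⟩, hpa⟩
    rw [hseteq]
    have hE1 : ∑ p ∈ (Finset.univ.filter (IsShuffle (n + 1) r) ×ˢ Finset.univ).filter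
        (fun p : Equiv.Perm (Fin (n+1)) × Fin n =>
          p.1 p.2.castSucc = a ∧ p.1 p.2.succ = b),
        eval ((x ∘ p.1) ∘ (p.2.succ).succAbove) g = 0 := by
      rw [keyA x g a b hb hblock,
        show (if (a:ℕ) < r then r-1 else r) = r-1 from if_pos (by omega)]
      exact hg (r-1) (by omega) (by omega) (x ∘ b.succAbove)
    have hE2 : ∑ p ∈ (Finset.univ.filter (IsShuffle (n + 1) r) ×ˢ Finset.univ).filter
        (fun p : Equiv.Perm (Fin (n+1)) × Fin n =>
          p.1 p.2.castSucc = a ∧ p.1 p.2.succ = b),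
        eval ((x ∘ p.1) ∘ (p.2.castSucc).succAbove) g = 0 := by
      rw [keyB x g a b hb hblock,
        show (if (a:ℕ) < r then r-1 else r) = r-1 from if_pos (by omega)]
      exact hg (r-1) (by omega) (by omega) (x ∘ a.succAbove)
    have hTeq : ∀ p ∈ (Finset.univ.filter (IsShuffle (n + 1) r) ×ˢ Finset.univ).filter
        (fun p : Equiv.Perm (Fin (n+1)) × Fin n =>
          p.1 p.2.castSucc = a ∧ p.1 p.2.succ = b),
        Tterm n f g x p
        = eval ![x a, x b] f / (x a - x b) / x a
            * eval ((x ∘ p.1) ∘ (p.2.succ).succAbove) g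
          - eval ![x a, x b] f / (x a - x b) / x b
            * eval ((x ∘ p.1) ∘ (p.2.castSucc).succAbove) g := by
      intro p hp
      simp only [Finset.mem_filter, Finset.mem_product, Finset.mem_univ, true_and,
        and_true] at hp
      obtain ⟨-, hpa, hpb⟩ := hp
      rw [Tterm, hpa, hpb]
      ring
    rw [Finset.sum_congr rfl hTeq, Finset.sum_sub_distrib, ← Finset.mul_sum, ← Finset.mul_sum,
      hE1, hE2]
    ring
  have hsecond : ∑ p ∈ ((Finset.univ.filter (IsShuffle (n + 1) r)
      ×ˢ (Finset.univ : Finset (Fin n))).filter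
      (fun p => ¬(((p.1 p.2.castSucc : Fin (n+1)) : ℕ) < r
        ∧ ((p.1 p.2.succ : Fin (n+1)) : ℕ) < r))).filter
      (fun p => r ≤ ((p.1 p.2.castSucc : Fin (n+1)) : ℕ)
        ∧ r ≤ ((p.1 p.2.succ : Fin (n+1)) : ℕ)), Tterm n f g x p = 0 := by
    rw [← Finset.sum_fiberwise_of_maps_to (g := fun p => p.1 p.2.castSucc)
      (t := Finset.univ.filter (fun a : Fin (n+1) => r ≤ (a:ℕ) ∧ (a:ℕ)+1 < n+1))
      (fun p hp => by
        simp only [Finset.mem_filter, Finset.mem_product, Finset.mem_univ, true_and,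
          and_true] at hp ⊢
        obtain ⟨⟨hs, -⟩, hq1, hq2⟩ := hp
        have := adj_consec hs (show ((p.2.succ : Fin (n+1)) : ℕ) = ((p.2.castSucc : Fin (n+1)) : ℕ)+1
          by simp) (Or.inr ⟨hq1, hq2⟩)
        have := (p.1 p.2.succ).isLt
        omega)]
    apply Finset.sum_eq_zero
    intro a hA
    simp only [Finset.mem_filter, Finset.mem_univ, true_and] at hA
    obtain ⟨hAr, hAn⟩ := hA
    set b : Fin (n+1) := ⟨(a:ℕ)+1, hAn⟩ with hbdef
    have hb : (b:ℕ) = (a:ℕ)+1 := rfl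
    have hblock : (a:ℕ)+1 < r ∨ r ≤ (a:ℕ) := Or.inr hAr
    have hseteq : (((Finset.univ.filter (IsShuffle (n + 1) r)
        ×ˢ (Finset.univ : Finset (Fin n))).filter
        (fun p => ¬(((p.1 p.2.castSucc : Fin (n+1)) : ℕ) < r
          ∧ ((p.1 p.2.succ : Fin (n+1)) : ℕ) < r))).filter
        (fun p => r ≤ ((p.1 p.2.castSucc : Fin (n+1)) : ℕ)
          ∧ r ≤ ((p.1 p.2.succ : Fin (n+1)) : ℕ))).filter
        (fun p => p.1 p.2.castSucc = a)
        = (Finset.univ.filter (IsShuffle (n + 1) r) ×ˢ Finset.univ).filter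
          (fun p : Equiv.Perm (Fin (n+1)) × Fin n =>
            p.1 p.2.castSucc = a ∧ p.1 p.2.succ = b) := by
      ext p
      simp only [Finset.mem_filter, Finset.mem_product, Finset.mem_univ, true_and, and_true]
      constructor
      · rintro ⟨⟨⟨hs, -⟩, hq1, hq2⟩, hpa⟩
        refine ⟨hs, hpa, ?_⟩
        have hcs := adj_consec hs (show ((p.2.succ : Fin (n+1)) : ℕ)
          = ((p.2.castSucc : Fin (n+1)) : ℕ)+1 by simp) (Or.inr ⟨hq1, hq2⟩)
        apply Fin.ext
        rw [hcs, hpa, hb]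
      · rintro ⟨hs, hpa, hpb⟩
        have h1 : ((p.1 p.2.castSucc : Fin (n+1)) : ℕ) = (a:ℕ) := congrArg Fin.val hpa
        have h2 : ((p.1 p.2.succ : Fin (n+1)) : ℕ) = (b:ℕ) := congrArg Fin.val hpb
        exact ⟨⟨⟨hs, by omega⟩, by omega, by omega⟩, hpa⟩
    rw [hseteq]
    have hE1 : ∑ p ∈ (Finset.univ.filter (IsShuffle (n + 1) r) ×ˢ Finset.univ).filter
        (fun p : Equiv.Perm (Fin (n+1)) × Fin n =>
          p.1 p.2.castSucc = a ∧ p.1 p.2.succ = b),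
        eval ((x ∘ p.1) ∘ (p.2.succ).succAbove) g = 0 := by
      rw [keyA x g a b hb hblock,
        show (if (a:ℕ) < r then r-1 else r) = r from if_neg (by omega)]
      exact hg r hr1 (by omega) (x ∘ b.succAbove)
    have hE2 : ∑ p ∈ (Finset.univ.filter (IsShuffle (n + 1) r) ×ˢ Finset.univ).filter
        (fun p : Equiv.Perm (Fin (n+1)) × Fin n =>
          p.1 p.2.castSucc = a ∧ p.1 p.2.succ = b),
        eval ((x ∘ p.1) ∘ (p.2.castSucc).succAbove) g = 0 := by
      rw [keyB x g a b hb hblock,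
        show (if (a:ℕ) < r then r-1 else r) = r from if_neg (by omega)]
      exact hg r hr1 (by omega) (x ∘ a.succAbove)
    have hTeq : ∀ p ∈ (Finset.univ.filter (IsShuffle (n + 1) r) ×ˢ Finset.univ).filter
        (fun p : Equiv.Perm (Fin (n+1)) × Fin n =>
          p.1 p.2.castSucc = a ∧ p.1 p.2.succ = b),
        Tterm n f g x p
        = eval ![x a, x b] f / (x a - x b) / x a
            * eval ((x ∘ p.1) ∘ (p.2.succ).succAbove) g
          - eval ![x a, x b] f / (x a - x b) / x b
            * eval ((x ∘ p.1) ∘ (p.2.castSucc).succAbove) g := by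
      intro p hp
      simp only [Finset.mem_filter, Finset.mem_product, Finset.mem_univ, true_and,
        and_true] at hp
      obtain ⟨-, hpa, hpb⟩ := hp
      rw [Tterm, hpa, hpb]
      ring
    rw [Finset.sum_congr rfl hTeq, Finset.sum_sub_distrib, ← Finset.mul_sum, ← Finset.mul_sum,
      hE1, hE2]
    ring
  have hmixed : ∑ p ∈ ((Finset.univ.filter (IsShuffle (n + 1) r)
      ×ˢ (Finset.univ : Finset (Fin n))).filter
      (fun p => ¬(((p.1 p.2.castSucc : Fin (n+1)) : ℕ) < r
        ∧ ((p.1 p.2.succ : Fin (n+1)) : ℕ) < r))).filter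
      (fun p => ¬(r ≤ ((p.1 p.2.castSucc : Fin (n+1)) : ℕ)
        ∧ r ≤ ((p.1 p.2.succ : Fin (n+1)) : ℕ))), Tterm n f g x p = 0 := by
    apply Finset.sum_involution
      (g := fun p _ => (p.1 * Equiv.swap p.2.castSucc p.2.succ, p.2))
    · -- cancellation
      intro p hp
      simp only [Finset.mem_filter, Finset.mem_product, Finset.mem_univ, true_and,
        and_true] at hp
      obtain ⟨⟨hs, hq1⟩, hq2⟩ := hp
      have e1 : (p.1 * Equiv.swap p.2.castSucc p.2.succ) p.2.castSucc = p.1 p.2.succ := by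
        rw [Equiv.Perm.mul_apply, Equiv.swap_apply_left]
      have e2 : (p.1 * Equiv.swap p.2.castSucc p.2.succ) p.2.succ = p.1 p.2.castSucc := by
        rw [Equiv.Perm.mul_apply, Equiv.swap_apply_right]
      have e3 : (x ∘ ⇑(p.1 * Equiv.swap p.2.castSucc p.2.succ)) ∘ (p.2.succ).succAbove
          = (x ∘ ⇑p.1) ∘ (p.2.castSucc).succAbove := by
        funext j
        simp only [Function.comp_apply, Equiv.Perm.coe_mul]
        rw [swap_piv₁]
      have e4 : (x ∘ ⇑(p.1 * Equiv.swap p.2.castSucc p.2.succ)) ∘ (p.2.castSucc).succAbove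
          = (x ∘ ⇑p.1) ∘ (p.2.succ).succAbove := by
        funext j
        simp only [Function.comp_apply, Equiv.Perm.coe_mul]
        rw [swap_piv₂]
      show Tterm n f g x p + Tterm n f g x (p.1 * Equiv.swap p.2.castSucc p.2.succ, p.2) = 0
      rw [Tterm, Tterm]
      simp only [e1, e2, e3, e4]
      rw [show eval ![x (p.1 p.2.succ), x (p.1 p.2.castSucc)] f
          = -eval ![x (p.1 p.2.castSucc), x (p.1 p.2.succ)] f from by
        linarith [hanti (x (p.1 p.2.castSucc)) (x (p.1 p.2.succ))]]
      rw [show x (p.1 p.2.succ) - x (p.1 p.2.castSucc)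
          = -(x (p.1 p.2.castSucc) - x (p.1 p.2.succ)) from by ring]
      rw [neg_div_neg_eq]
      ring
    · -- no fixed point
      intro p hp hT heq
      have h1 := congrArg Prod.fst heq
      simp only at h1
      have h2 := congrArg (fun τ : Equiv.Perm (Fin (n+1)) => τ p.2.castSucc) h1
      simp only [Equiv.Perm.mul_apply, Equiv.swap_apply_left] at h2
      have h3 := p.1.injective h2
      have h4 := congrArg Fin.val h3
      simp only [Fin.val_succ, Fin.coe_castSucc] at h4
      omega
    · -- involutive
      intro p hp
      have h5 : (p.1 * Equiv.swap p.2.castSucc p.2.succ) * Equiv.swap p.2.castSucc p.2.succ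
          = p.1 := by
        rw [mul_assoc, Equiv.swap_mul_self, mul_one]
      exact Prod.ext h5 rfl
    · -- membership
      intro p hp
      simp only [Finset.mem_filter, Finset.mem_product, Finset.mem_univ, true_and,
        and_true] at hp ⊢
      obtain ⟨⟨hs, hq1⟩, hq2⟩ := hp
      have e1 : (p.1 * Equiv.swap p.2.castSucc p.2.succ) p.2.castSucc = p.1 p.2.succ := by
        rw [Equiv.Perm.mul_apply, Equiv.swap_apply_left]
      have e2 : (p.1 * Equiv.swap p.2.castSucc p.2.succ) p.2.succ = p.1 p.2.castSucc := by
        rw [Equiv.Perm.mul_apply, Equiv.swap_apply_right]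
      refine ⟨⟨swap_shuffle hs p.2 hq1 hq2, ?_⟩, ?_⟩
      · rw [e1, e2]; tauto
      · rw [e1, e2]; tauto
  rw [hfirst, hsecond, hmixed]
  norm_num
end
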